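/- arXiv:1810.00727 — 7 statements merged into one kernel-verified Lean document; each statement's English description precedes it below -/
import Mathlib

section
/- If x : ℝ → ℝ is positive and satisfies x' = x(1 - x/γ) - xy/(1+αξ+x) with 0 < x(0) < γ, γ > 0, α,ξ ≥ 0, and y ≥ 0, then x(t) < γ for all t ≥ 0. -/
theorem pest_below_carrying_capacity
    (γ α ξ : ℝ) (x y : ℝ → ℝ)
    (hγ : 0 < γ) (hα : 0 ≤ α) (hξ : 0 ≤ ξ)
    (hxpos : ∀ t, 0 < x t)
    (hy : ∀ t, 0 ≤ y t)
    (hx : ∀ t, HasDerivAt x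
      (x t * (1 - x t / γ) - x t * y t / (1 + α * ξ + x t)) t)
    (hx0 : x 0 < γ) :
    ∀ t ≥ (0:ℝ), x t < γ := by
  have hD : ∀ t, 0 < 1 + α * ξ + x t := by
    intro t
    have := hxpos t
    nlinarith [mul_nonneg hα hξ]
  set w : ℝ → ℝ := fun t => Real.exp t * ((x t)⁻¹ - γ⁻¹) with hw
  have hwderiv : ∀ t, HasDerivAt w
      (Real.exp t * (y t / (x t * (1 + α * ξ + x t)))) t := by
    intro t
    have hxne : x t ≠ 0 := ne_of_gt (hxpos t)
    have hDne : (1 + α * ξ + x t) ≠ 0 := ne_of_gt (hD t)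
    have h1 : HasDerivAt (fun s => (x s)⁻¹ - γ⁻¹)
        (-(x t * (1 - x t / γ) - x t * y t / (1 + α * ξ + x t)) / (x t)^2) t :=
      ((hx t).inv hxne).sub_const _
    have h2 : HasDerivAt (fun s => Real.exp s * ((x s)⁻¹ - γ⁻¹)) _ t := (Real.hasDerivAt_exp t).mul h1
    convert h2 using 1
    field_simp
    ring
  have hmono : MonotoneOn w (Set.Ici (0:ℝ)) := by
    apply monotoneOn_of_deriv_nonneg (convex_Ici 0)
    · exact (Differentiable.continuous (fun t => (hwderiv t).differentiableAt)).continuousOn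
    · intro t _
      exact ((hwderiv t).differentiableAt).differentiableWithinAt
    · intro t _
      rw [(hwderiv t).deriv]
      exact mul_nonneg (Real.exp_pos t).le
        (div_nonneg (hy t) (mul_nonneg (hxpos t).le (hD t).le))
  intro t ht
  have h0 : w 0 ≤ w t := hmono (Set.self_mem_Ici) ht ht
  have hw0 : 0 < w 0 := by
    have : γ⁻¹ < (x 0)⁻¹ := by
      exact (inv_lt_inv₀ hγ (hxpos 0)).mpr hx0
    simp only [hw, Real.exp_zero, one_mul]
    linarith
  have hwt : 0 < w t := lt_of_lt_of_le hw0 h0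
  have : γ⁻¹ < (x t)⁻¹ := by
    have he := Real.exp_pos t
    simp only [hw] at hwt
    have : 0 < (x t)⁻¹ - γ⁻¹ := by
      by_contra h
      push_neg at h
      nlinarith [mul_nonpos_of_nonneg_of_nonpos he.le h]
    linarith
  exact (inv_lt_inv₀ hγ (hxpos t)).mp this
end

section
/- Suppose x : [0,∞) → ℝ is positive and satisfies the pest equation of system (1) with positive parameters γ, β, δ, α, ξ, with y nonnegative satisfying the predator equation, and x(0) > 0. Then there is no finite time T* such that x(t) → 0 as t → T*; i.e., x(t) > 0 for every t ≥ 0 (pest eradication is not possible in finite time). -/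
theorem no_finite_time_pest_eradication
    (γ β δ α ξ : ℝ) (x y : ℝ → ℝ)
    (hγ : 0 < γ) (hβ : 0 < β) (hδ : 0 < δ) (hα : 0 < α) (hξ : 0 < ξ)
    (hx0 : 0 < x 0)
    (hynn : ∀ t, 0 ≤ y t)
    (hx : ∀ t, HasDerivAt x
      (x t * (1 - x t / γ) - x t * y t / (1 + α * ξ + x t)) t)
    (hy : ∀ t, HasDerivAt y
      (β * x t * y t / (1 + α * ξ + x t)
        + β * ξ * y t / (1 + α * ξ + x t) - δ * y t) t) :
    ∀ t ≥ (0:ℝ), 0 < x t := by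
  intro t ht
  by_contra hneg
  push_neg at hneg
  have hdx : Differentiable ℝ x := fun s => (hx s).differentiableAt
  have hdy : Differentiable ℝ y := fun s => (hy s).differentiableAt
  have hcx : Continuous x := hdx.continuous
  have hcy : Continuous y := hdy.continuous
  set S : Set ℝ := {s | 0 ≤ s} ∩ {s | x s ≤ 0} with hS
  have hSne : S.Nonempty := ⟨t, ht, hneg⟩
  have hSclosed : IsClosed S :=
    (isClosed_le continuous_const continuous_id).inter (isClosed_le hcx continuous_const)
  have hbdd : BddBelow S := ⟨0, fun s hs => hs.1⟩
  set T := sInf S with hTdef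
  have hTS : T ∈ S := hSclosed.csInf_mem hSne hbdd
  have hT0 : 0 < T := by
    rcases lt_or_eq_of_le (show (0:ℝ) ≤ T from hTS.1) with h | h
    · exact h
    · exfalso
      have h2 : x T ≤ 0 := hTS.2
      rw [← h] at h2
      linarith
  have hpos : ∀ s, 0 ≤ s → s < T → 0 < x s := by
    intro s hs hsT
    by_contra h
    push_neg at h
    exact absurd (csInf_le hbdd ⟨hs, h⟩) (not_le.mpr hsT)
  -- bounds on x and y over [0, T]
  obtain ⟨C1, hC1⟩ := isCompact_Icc.exists_bound_of_continuousOn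
    (hcx.continuousOn : ContinuousOn x (Set.Icc 0 T))
  obtain ⟨C2, hC2⟩ := isCompact_Icc.exists_bound_of_continuousOn
    (hcy.continuousOn : ContinuousOn y (Set.Icc 0 T))
  set C := max C1 C2 with hCdef
  have hC : ∀ s ∈ Set.Icc (0:ℝ) T, x s ≤ C ∧ y s ≤ C := by
    intro s hs
    constructor
    · have := hC1 s hs
      rw [Real.norm_eq_abs] at this
      exact le_trans (le_trans (le_abs_self _) this) (le_max_left _ _)
    · have := hC2 s hs
      rw [Real.norm_eq_abs] at this
      exact le_trans (le_trans (le_abs_self _) this) (le_max_right _ _)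
  set L := C / γ + C with hLdef
  set g := fun s => Real.exp (L * s) * x s with hgdef
  have hg' : ∀ s, HasDerivAt g
      (Real.exp (L * s) * (L * x s +
        (x s * (1 - x s / γ) - x s * y s / (1 + α * ξ + x s)))) s := by
    intro s
    have h0 : HasDerivAt (fun u => L * u) L s := by
      simpa using (hasDerivAt_id s).const_mul L
    have h1 : HasDerivAt (fun u => Real.exp (L * u)) (Real.exp (L * s) * L) s := h0.exp
    have h2 := h1.mul (hx s)
    exact h2.congr_deriv (by ring)
  have hcg : Continuous g := by
    apply Continuous.mul _ hcx
    exact Real.continuous_exp.comp (continuous_const.mul continuous_id)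
  have hmono : MonotoneOn g (Set.Icc 0 T) := by
    apply monotoneOn_of_deriv_nonneg (convex_Icc 0 T) hcg.continuousOn
      (fun s _ => (hg' s).differentiableAt.differentiableWithinAt)
    intro s hs
    rw [interior_Icc] at hs
    rw [(hg' s).deriv]
    have hxs : 0 < x s := hpos s hs.1.le hs.2
    have hden : 1 < 1 + α * ξ + x s := by nlinarith [mul_pos hα hξ]
    have hys := hynn s
    have hsmem : s ∈ Set.Icc (0:ℝ) T := ⟨hs.1.le, hs.2.le⟩
    have hCx : x s ≤ C := (hC s hsmem).1
    have hCy : y s ≤ C := (hC s hsmem).2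
    have hfrac : x s * y s / (1 + α * ξ + x s) ≤ x s * y s :=
      div_le_self (by positivity) hden.le
    have hxy : x s * y s ≤ x s * C := mul_le_mul_of_nonneg_left hCy hxs.le
    have hxx : x s * (x s / γ) ≤ x s * (C / γ) :=
      mul_le_mul_of_nonneg_left ((div_le_div_iff_of_pos_right hγ).mpr hCx) hxs.le
    have hkey : 0 ≤ L * x s +
        (x s * (1 - x s / γ) - x s * y s / (1 + α * ξ + x s)) := by
      have hexpand : L * x s + (x s * (1 - x s / γ) - x s * y s / (1 + α * ξ + x s))
          = x s * (C / γ) + x s * C + x s - x s * (x s / γ)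
            - x s * y s / (1 + α * ξ + x s) := by
        rw [hLdef]; ring
      rw [hexpand]
      nlinarith
    exact mul_nonneg (Real.exp_pos _).le hkey
  have hmem0 : (0:ℝ) ∈ Set.Icc (0:ℝ) T := ⟨le_refl 0, hT0.le⟩
  have hmemT : T ∈ Set.Icc (0:ℝ) T := ⟨hT0.le, le_refl T⟩
  have hgle : g 0 ≤ g T := hmono hmem0 hmemT hT0.le
  have hg0 : g 0 = x 0 := by simp [hgdef]
  have hgT : g T ≤ 0 :=
    mul_nonpos_of_nonneg_of_nonpos (Real.exp_pos _).le hTS.2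
  rw [hg0] at hgle
  linarith
end

section
/- Suppose x, y solve system (1) with positive parameters and 0 < x(0) < γ, and suppose for all t ≥ 0 we have y(t) ≥ x(t) + 1 + αξ. Then x(t) ≤ x(0)γ/(γ + x(0)t) for all t ≥ 0. -/
theorem pest_polynomial_decay
    (γ β δ α ξ : ℝ) (x y : ℝ → ℝ)
    (hγ : 0 < γ) (hβ : 0 < β) (hδ : 0 < δ) (hα : 0 < α) (hξ : 0 < ξ)
    (hxpos : ∀ t, 0 < x t)
    (hx0 : 0 < x 0) (hx0γ : x 0 < γ)
    (hx : ∀ t, HasDerivAt x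
      (x t * (1 - x t / γ) - x t * y t / (1 + α * ξ + x t)) t)
    (hy : ∀ t, HasDerivAt y
      (β * x t * y t / (1 + α * ξ + x t)
        + β * ξ * y t / (1 + α * ξ + x t) - δ * y t) t)
    (hphase : ∀ t ≥ (0:ℝ), y t ≥ x t + 1 + α * ξ) :
    ∀ t ≥ (0:ℝ), x t ≤ x 0 * γ / (γ + x 0 * t) := by
  intro t ht
  set g : ℝ → ℝ := fun s => (x s)⁻¹ - s / γ with hg
  have hderiv : ∀ s, HasDerivAt g
      (-(x s * (1 - x s / γ) - x s * y s / (1 + α * ξ + x s)) / (x s) ^ 2 - 1 / γ) s := by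
    intro s
    have h1 : HasDerivAt (fun u => (x u)⁻¹)
        (-(x s * (1 - x s / γ) - x s * y s / (1 + α * ξ + x s)) / (x s) ^ 2) s :=
      (hx s).inv (hxpos s).ne'
    have h2 : HasDerivAt (fun u : ℝ => u / γ) (1 / γ) s := by
      simpa using (hasDerivAt_id s).div_const γ
    exact h1.sub h2
  have hdiff : Differentiable ℝ g := fun s => (hderiv s).differentiableAt
  have mono : MonotoneOn g (Set.Ici (0:ℝ)) := by
    apply monotoneOn_of_deriv_nonneg (convex_Ici 0) hdiff.continuous.continuousOn
      (fun s _ => (hdiff s).differentiableWithinAt)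
    intro s hs
    rw [interior_Ici] at hs
    rw [(hderiv s).deriv]
    have hd : 0 < 1 + α * ξ + x s := by nlinarith [hxpos s, mul_pos hα hξ]
    have hyb : y s ≥ 1 + α * ξ + x s := by linarith [hphase s hs.le]
    have h2 : x s ≤ x s * y s / (1 + α * ξ + x s) := by
      rw [le_div_iff₀ hd]
      nlinarith [hxpos s]
    have h3 : x s * (1 - x s / γ) - x s * y s / (1 + α * ξ + x s) ≤ -(x s ^ 2 / γ) := by
      have : x s * (1 - x s / γ) - x s = -(x s ^ 2 / γ) := by field_simp; ring
      linarith
    rw [sub_nonneg, le_div_iff₀ (pow_pos (hxpos s) 2)]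
    have : 1 / γ * x s ^ 2 = x s ^ 2 / γ := by ring
    linarith
  have key : (x 0)⁻¹ + t / γ ≤ (x t)⁻¹ := by
    have h := mono Set.self_mem_Ici ht ht
    simp only [hg, zero_div] at h
    linarith [h]
  have hden : 0 < γ + x 0 * t := by positivity
  rw [le_div_iff₀ hden]
  have hmul := mul_le_mul_of_nonneg_right key
    (le_of_lt (mul_pos (mul_pos (hxpos t) hx0) hγ))
  have e1 : ((x 0)⁻¹ + t / γ) * (x t * x 0 * γ) = x t * (γ + x 0 * t) := by
    field_simp
  have e2 : (x t)⁻¹ * (x t * x 0 * γ) = x 0 * γ := by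
    rw [← mul_assoc, ← mul_assoc, inv_mul_cancel₀ (hxpos t).ne', one_mul]
  linarith
end

section
/- Let q ∈ (0,1) and suppose ṽ : [0,T) → ℝ solves ṽ' = -ṽ + ṽ²/(1+ṽ^q) with ṽ(0) = v₀ satisfying v₀ > v₀^q + 1. Then ṽ cannot be extended to a global solution on [0,∞): ṽ blows up in finite time. -/
theorem blow_up_ode_no_global_solution
    (q v₀ : ℝ) (hq : 0 < q) (hq1 : q < 1)
    (hv₀ : v₀ ^ q + 1 < v₀) :
    ¬ ∃ v : ℝ → ℝ, v 0 = v₀ ∧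
      ∀ t ≥ (0:ℝ), HasDerivAt v (-v t + (v t) ^ 2 / (1 + (v t) ^ q)) t := by
  rintro ⟨v, hv0, hD⟩
  -- v₀ > 1
  have hv₀pos : 0 < v₀ := by
    by_contra h
    push_neg at h
    have habs : |v₀ ^ q| ≤ |v₀| ^ q := Real.abs_rpow_le_abs_rpow v₀ q
    have h1 : -((-v₀) ^ q) ≤ v₀ ^ q := by
      have h1' : -(|v₀| ^ q) ≤ v₀ ^ q := by
        nlinarith [neg_abs_le (v₀ ^ q)]
      rwa [abs_of_nonpos h] at h1'
    have hw : (0:ℝ) ≤ -v₀ := by linarith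
    have h2 : (-v₀) ^ q ≤ 1 + -v₀ := by
      rcases le_total (-v₀) 1 with hle | hle
      · have := Real.rpow_le_one hw hle hq.le
        linarith
      · have := Real.rpow_le_rpow_of_exponent_le hle hq1.le
        rw [Real.rpow_one] at this
        linarith
    linarith
  have hv₀1 : 1 < v₀ := by
    have := Real.rpow_pos_of_pos hv₀pos q
    linarith
  set δ : ℝ := v₀ - v₀ ^ q - 1 with hδdef
  have hδ : 0 < δ := by simp only [hδdef]; linarith
  -- pointwise lower bound on the vector field for x ≥ v₀
  have fge : ∀ x : ℝ, v₀ ≤ x → δ / 2 ≤ -x + x ^ 2 / (1 + x ^ q) := by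
    intro x hx
    have hx1 : 1 < x := lt_of_lt_of_le hv₀1 hx
    have hx0 : 0 < x := by linarith
    have hxq_pos : 0 < x ^ q := Real.rpow_pos_of_pos hx0 q
    have hdiv : (x / v₀) ^ q ≤ x / v₀ := by
      have h1 : 1 ≤ x / v₀ := (one_le_div hv₀pos).2 hx
      have := Real.rpow_le_rpow_of_exponent_le h1 hq1.le
      rwa [Real.rpow_one] at this
    have hxq_le : x ^ q ≤ v₀ ^ q / v₀ * x := by
      have h1 : x ^ q = v₀ ^ q * (x / v₀) ^ q := by
        rw [← Real.mul_rpow (le_of_lt hv₀pos) (by positivity)]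
        rw [mul_div_cancel₀ _ (ne_of_gt hv₀pos)]
      rw [h1]
      have h2 := mul_le_mul_of_nonneg_left hdiv (le_of_lt (Real.rpow_pos_of_pos hv₀pos q))
      calc v₀ ^ q * (x / v₀) ^ q ≤ v₀ ^ q * (x / v₀) := h2
        _ = v₀ ^ q / v₀ * x := by ring
    have hnum : x * δ ≤ x * (x - 1 - x ^ q) := by
      have h2 : δ ≤ x - 1 - x ^ q := by
        have h4 : v₀ ^ q / v₀ + (v₀ - v₀ ^ q) / v₀ = 1 := by field_simp; ring
        have h5 : (v₀ - v₀ ^ q) / v₀ * v₀ ≤ (v₀ - v₀ ^ q) / v₀ * x := by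
          apply mul_le_mul_of_nonneg_left hx
          exact div_nonneg (by linarith) (by linarith)
        have h6 : (v₀ - v₀ ^ q) / v₀ * v₀ = v₀ - v₀ ^ q := by field_simp
        simp only [hδdef]
        nlinarith
      nlinarith
    have hxq_le_x : x ^ q ≤ x := by
      have := Real.rpow_le_rpow_of_exponent_le hx1.le hq1.le
      rwa [Real.rpow_one] at this
    have hden : 1 + x ^ q ≤ 2 * x := by linarith
    have key : x * δ / (2 * x) ≤ x * (x - 1 - x ^ q) / (1 + x ^ q) :=
      div_le_div₀ (by nlinarith) hnum (by positivity) hden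
    have heq1 : x * δ / (2 * x) = δ / 2 := by
      field_simp
    have heq2 : x * (x - 1 - x ^ q) / (1 + x ^ q) = -x + x ^ 2 / (1 + x ^ q) := by
      field_simp; ring
    rw [heq1, heq2] at key
    exact key
  -- invariance: v t ≥ v₀ for all t ≥ 0
  have hinv : ∀ t : ℝ, 0 ≤ t → v₀ ≤ v t := by
    by_contra h
    push_neg at h
    obtain ⟨t₁, ht₁0, hlt⟩ := h
    set S : Set ℝ := {t | t ∈ Set.Icc 0 t₁ ∧ v₀ ≤ v t} with hSdef
    have hS0 : (0:ℝ) ∈ S := ⟨Set.mem_Icc.2 ⟨le_refl 0, ht₁0⟩, by rw [hv0]⟩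
    have hScont : ContinuousOn v (Set.Icc 0 t₁) := fun t ht =>
      ((hD t ht.1).continuousAt).continuousWithinAt
    have hSclosed : IsClosed S := by
      have hSeq : S = Set.Icc 0 t₁ ∩ v ⁻¹' Set.Ici v₀ := by
        ext t
        simp only [hSdef, Set.mem_setOf_eq, Set.mem_inter_iff, Set.mem_preimage, Set.mem_Ici]
      rw [hSeq]
      exact hScont.preimage_isClosed_of_isClosed isClosed_Icc isClosed_Ici
    have hScompact : IsCompact S := isCompact_Icc.of_isClosed_subset hSclosed (fun t ht => ht.1)
    have hSne : S.Nonempty := ⟨0, hS0⟩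
    set s := sSup S with hsdef
    have hsS : s ∈ S := hScompact.sSup_mem hSne
    have hsv : v₀ ≤ v s := hsS.2
    have hs0 : 0 ≤ s := hsS.1.1
    have hst₁ : s ≤ t₁ := hsS.1.2
    have hslt : s < t₁ := lt_of_le_of_ne hst₁ (by
      intro he
      rw [he] at hsv
      linarith)
    have hafter : ∀ u : ℝ, s < u → u ≤ t₁ → v u < v₀ := by
      intro u hsu hut
      by_contra hcon
      push_neg at hcon
      have huS : u ∈ S := ⟨Set.mem_Icc.2 ⟨le_trans hs0 hsu.le, hut⟩, hcon⟩
      have := le_csSup hScompact.bddAbove huS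
      linarith
    have hdpos : 0 < -v s + (v s) ^ 2 / (1 + (v s) ^ q) :=
      lt_of_lt_of_le (by linarith) (fge (v s) hsv)
    have hslope := hasDerivAt_iff_tendsto_slope.1 (hD s hs0)
    have hev : ∀ᶠ u in nhdsWithin s (Set.Ioi s), 0 < slope v s u := by
      have h1 : ∀ᶠ u in nhdsWithin s {s}ᶜ, 0 < slope v s u :=
        hslope (IsOpen.mem_nhds isOpen_Ioi hdpos)
      exact h1.filter_mono (nhdsWithin_mono s (fun u hu => ne_of_gt hu))
    have hIoo : Set.Ioo s t₁ ∈ nhdsWithin s (Set.Ioi s) :=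
      Ioo_mem_nhdsGT_of_mem ⟨le_refl s, hslt⟩
    have hmem : ∀ᶠ u in nhdsWithin s (Set.Ioi s), u ∈ Set.Ioo s t₁ :=
      Filter.eventually_of_mem hIoo (fun u hu => hu)
    obtain ⟨u, hu1, hu2⟩ := (hev.and hmem).exists
    have hsu : s < u := hu2.1
    rw [slope_def_field] at hu1
    have h3 : (0:ℝ) < u - s := by linarith
    have hvu : v s < v u := by
      have h4 := mul_pos hu1 h3
      rw [div_mul_cancel₀ _ (ne_of_gt h3)] at h4
      linarith
    have := hafter u hsu hu2.2.le
    linarith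
  -- linear growth: v t ≥ v₀ + δ/2 * t
  have hgrow : ∀ t : ℝ, 0 ≤ t → v₀ + δ / 2 * t ≤ v t := by
    intro t ht
    set w : ℝ → ℝ := fun t => v t - δ / 2 * t with hwdef
    have hwD : ∀ x : ℝ, 0 ≤ x →
        HasDerivAt w (-v x + (v x) ^ 2 / (1 + (v x) ^ q) - δ / 2) x := by
      intro x hx
      have hid : HasDerivAt (fun t : ℝ => δ / 2 * t) (δ / 2) x := by
        simpa using (hasDerivAt_id x).const_mul (δ / 2)
      exact (hD x hx).sub hid
    have hmono : MonotoneOn w (Set.Ici 0) := by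
      apply monotoneOn_of_deriv_nonneg (convex_Ici 0)
      · exact fun x hx => ((hwD x hx).continuousAt).continuousWithinAt
      · intro x hx
        rw [interior_Ici] at hx
        exact ((hwD x (le_of_lt hx)).differentiableAt).differentiableWithinAt
      · intro x hx
        rw [interior_Ici] at hx
        rw [(hwD x (le_of_lt hx)).deriv]
        have := fge (v x) (hinv x (le_of_lt hx))
        linarith
    have hle := hmono Set.self_mem_Ici (Set.mem_Ici.2 ht) ht
    simp only [hwdef] at hle
    rw [hv0] at hle
    linarith
  -- choose threshold V with V ^ (q-1) ≤ 1/4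
  set V : ℝ := max v₀ ((4:ℝ) ^ ((1:ℝ) / (1 - q))) with hVdef
  have hq1' : (0:ℝ) < 1 - q := by linarith
  have hV4 : (4:ℝ) ^ ((1:ℝ) / (1 - q)) ≤ V := le_max_right _ _
  have hVv₀ : v₀ ≤ V := le_max_left _ _
  have hVpos : 0 < V := lt_of_lt_of_le hv₀pos hVv₀
  have hV1 : 1 < V := lt_of_lt_of_le hv₀1 hVv₀
  have hVq : V ^ (q - 1) ≤ 1 / 4 := by
    have h4 : (4:ℝ) ≤ V ^ (1 - q) := by
      have h1 : ((4:ℝ) ^ ((1:ℝ) / (1 - q))) ^ (1 - q) ≤ V ^ (1 - q) :=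
        Real.rpow_le_rpow (by positivity) hV4 (by linarith)
      have h2 : ((4:ℝ) ^ ((1:ℝ) / (1 - q))) ^ (1 - q) = 4 := by
        rw [← Real.rpow_mul (by norm_num : (0:ℝ) ≤ 4),
          one_div_mul_cancel (ne_of_gt hq1'), Real.rpow_one]
      linarith
    have h3 : V ^ (q - 1) = (V ^ (1 - q))⁻¹ := by
      rw [← Real.rpow_neg (le_of_lt hVpos)]
      congr 1
      ring
    rw [h3]
    have h5 : (V ^ (1 - q))⁻¹ ≤ (4:ℝ)⁻¹ :=
      inv_anti₀ (by norm_num) h4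
    norm_num at h5 ⊢
    linarith
  -- superlinear bound for x ≥ V
  have fbig : ∀ x : ℝ, V ≤ x → x ^ ((2:ℝ) - q) / 4 ≤ -x + x ^ 2 / (1 + x ^ q) := by
    intro x hx
    have hx1 : 1 < x := lt_of_lt_of_le hV1 hx
    have hx0 : 0 < x := by linarith
    have hxq1 : 1 ≤ x ^ q := Real.one_le_rpow hx1.le hq.le
    have hden : 1 + x ^ q ≤ 2 * x ^ q := by linarith
    have h1 : x ^ 2 / (2 * x ^ q) ≤ x ^ 2 / (1 + x ^ q) :=
      div_le_div_of_nonneg_left (by positivity) (by linarith) hden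
    have h2 : x ^ 2 / (2 * x ^ q) = x ^ ((2:ℝ) - q) / 2 := by
      rw [← Real.rpow_natCast x 2]
      rw [div_eq_div_iff (by positivity) (by norm_num)]
      rw [show ((2:ℕ):ℝ) = (2 - q) + q by push_cast; ring, Real.rpow_add hx0]
      ring
    have hxq1' : x ^ (q - 1) ≤ 1 / 4 := by
      calc x ^ (q - 1) ≤ V ^ (q - 1) :=
            Real.rpow_le_rpow_of_nonpos hVpos hx (by linarith)
        _ ≤ 1 / 4 := hVq
    have hxsplit : x = x ^ ((2:ℝ) - q) * x ^ (q - 1) := by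
      rw [← Real.rpow_add hx0]
      norm_num
    have hxpow_pos : 0 < x ^ ((2:ℝ) - q) := Real.rpow_pos_of_pos hx0 _
    have h3 : x ≤ x ^ ((2:ℝ) - q) / 4 := by
      conv_lhs => rw [hxsplit]
      calc x ^ ((2:ℝ) - q) * x ^ (q - 1) ≤ x ^ ((2:ℝ) - q) * (1 / 4) :=
            mul_le_mul_of_nonneg_left hxq1' hxpow_pos.le
        _ = x ^ ((2:ℝ) - q) / 4 := by ring
    linarith
  -- time after which v t ≥ V
  set T : ℝ := 2 * (V - v₀) / δ with hTdef
  have hT0 : 0 ≤ T := by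
    apply div_nonneg
    · linarith
    · linarith
  have hVt : ∀ t : ℝ, T ≤ t → V ≤ v t := by
    intro t ht
    have ht0 : 0 ≤ t := le_trans hT0 ht
    have := hgrow t ht0
    have h1 : δ / 2 * T ≤ δ / 2 * t := mul_le_mul_of_nonneg_left ht (by linarith)
    have h2 : δ / 2 * T = V - v₀ := by
      rw [hTdef]
      field_simp
    linarith
  -- the function g t = (v t)^(q-1) + c t is antitone on [T, ∞)
  set c : ℝ := (1 - q) / 4 with hcdef
  have hc : 0 < c := by rw [hcdef]; positivity
  set g : ℝ → ℝ := fun t => (v t) ^ (q - 1) + c * t with hgdef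
  have hgD : ∀ x : ℝ, T ≤ x →
      HasDerivAt g ((-v x + (v x) ^ 2 / (1 + (v x) ^ q)) * (q - 1) * (v x) ^ (q - 1 - 1) + c) x := by
    intro x hx
    have hx0 : 0 ≤ x := le_trans hT0 hx
    have hvx : 0 < v x := lt_of_lt_of_le hVpos (hVt x hx)
    have hid : HasDerivAt (fun t : ℝ => c * t) c x := by
      simpa using (hasDerivAt_id x).const_mul c
    exact ((hD x hx0).rpow_const (Or.inl (ne_of_gt hvx))).add hid
  have hganti : AntitoneOn g (Set.Ici T) := by
    apply antitoneOn_of_deriv_nonpos (convex_Ici T)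
    · exact fun x hx => ((hgD x hx).continuousAt).continuousWithinAt
    · intro x hx
      rw [interior_Ici] at hx
      exact ((hgD x (le_of_lt hx)).differentiableAt).differentiableWithinAt
    · intro x hx
      rw [interior_Ici] at hx
      rw [(hgD x (le_of_lt hx)).deriv]
      have hVx : V ≤ v x := hVt x (le_of_lt hx)
      have hvx0 : 0 < v x := lt_of_lt_of_le hVpos hVx
      have hf := fbig (v x) hVx
      have hA : 0 < (v x) ^ (q - 1 - 1) := Real.rpow_pos_of_pos hvx0 _
      have hprod : (v x) ^ ((2:ℝ) - q) * (v x) ^ (q - 1 - 1) = 1 := by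
        rw [← Real.rpow_add hvx0, show (2:ℝ) - q + (q - 1 - 1) = 0 by ring, Real.rpow_zero]
      have h14 : (v x) ^ ((2:ℝ) - q) / 4 * (v x) ^ (q - 1 - 1) = 1 / 4 := by
        rw [div_mul_eq_mul_div, hprod]
      have hfa : (1:ℝ) / 4 ≤ (-v x + (v x) ^ 2 / (1 + (v x) ^ q)) * (v x) ^ (q - 1 - 1) := by
        have := mul_le_mul_of_nonneg_right hf hA.le
        linarith [h14 ▸ this]
      have hqneg : q - 1 ≤ 0 := by linarith
      rw [hcdef]
      nlinarith [hfa, hqneg]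
  -- derive the contradiction
  have hvT : 0 < v T := lt_of_lt_of_le hVpos (hVt T (le_refl T))
  set t₂ : ℝ := T + (v T) ^ (q - 1) / c + 1 with ht₂def
  have hTt₂ : T ≤ t₂ := by
    have h0 : 0 ≤ (v T) ^ (q - 1) / c :=
      div_nonneg (Real.rpow_nonneg hvT.le _) hc.le
    rw [ht₂def]; linarith
  have hgle := hganti (Set.self_mem_Ici) (Set.mem_Ici.2 hTt₂) hTt₂
  simp only [hgdef] at hgle
  have hpos2 : 0 < (v t₂) ^ (q - 1) :=
    Real.rpow_pos_of_pos (lt_of_lt_of_le hVpos (hVt t₂ hTt₂)) _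
  have hct : c * t₂ = c * T + (v T) ^ (q - 1) + c := by
    rw [ht₂def]
    field_simp
  linarith
end

section
/- Let v, y : [0,T) → ℝ be positive with y(t) ≥ 1 for all t, and v' ≥ -v + v²/(1+v^q) with q ∈ (0,1) and v(0) = v₀ > v₀^q + 1. Then T < ∞, i.e., v blows up in finite time. -/
open Real Set

lemma c0_pos (q v₀ : ℝ) (h1 : 1 < v₀) (hv₀ : v₀ ^ q + 1 < v₀) :
    0 < 1 - 1/v₀ - v₀ ^ (q-1) := by
  have hv0pos : (0:ℝ) < v₀ := lt_trans one_pos h1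
  have hvq : v₀ ^ (q-1) * v₀ = v₀ ^ q := by
    rw [← Real.rpow_add_one hv0pos.ne']; ring_nf
  have h0 : (1/v₀) * v₀ = 1 := by field_simp
  have hmul : (1 - 1/v₀ - v₀ ^ (q-1)) * v₀ = v₀ - 1 - v₀ ^ q := by
    linear_combination -h0 - hvq
  nlinarith [hmul]

/-- Drift lower bound: for `x ≥ v₀`, `-x + x²/(1+x^q) ≥ (c₀/2)·x^(2-q)`
where `c₀ = 1 - 1/v₀ - v₀^(q-1)`. -/
lemma drift_lb (q v₀ x : ℝ) (hq : 0 < q) (hq1 : q < 1) (h1 : 1 < v₀)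
    (hv₀ : v₀ ^ q + 1 < v₀) (hx : v₀ ≤ x) :
    ((1 - 1/v₀ - v₀ ^ (q-1)) / 2) * x ^ (2-q) ≤ -x + x ^ 2 / (1 + x ^ q) := by
  have hv0pos : (0:ℝ) < v₀ := lt_trans one_pos h1
  have hxpos : 0 < x := lt_of_lt_of_le hv0pos hx
  have hx1 : (1:ℝ) ≤ x := le_trans h1.le hx
  have hxq1 : (1:ℝ) ≤ x ^ q := Real.one_le_rpow hx1 hq.le
  have hden : (0:ℝ) < 1 + x ^ q := by linarith
  set c₀ : ℝ := 1 - 1/v₀ - v₀ ^ (q-1) with hc₀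
  have hc₀pos : 0 < c₀ := c0_pos q v₀ h1 hv₀
  have hmono : x ^ (q-1) ≤ v₀ ^ (q-1) :=
    Real.rpow_le_rpow_of_nonpos hv0pos hx (by linarith)
  have hxq : x ^ (q-1) * x = x ^ q := by
    rw [← Real.rpow_add_one hxpos.ne']; ring_nf
  have e1 : (1:ℝ) ≤ x / v₀ := (one_le_div hv0pos).mpr hx
  have e2 : x ^ q ≤ v₀ ^ (q-1) * x := by
    rw [← hxq]; exact mul_le_mul_of_nonneg_right hmono hxpos.le
  have hkey : c₀ * x ≤ x - 1 - x ^ q := by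
    have hexp : c₀ * x = x - x/v₀ - v₀ ^ (q-1) * x := by
      rw [hc₀]; field_simp
    rw [hexp]; linarith
  have hA : c₀ * x * x ≤ x * (x - 1 - x ^ q) := by
    have := mul_le_mul_of_nonneg_left hkey hxpos.le
    nlinarith [this]
  have hApos : 0 ≤ c₀ * x * x := by positivity
  have hDle : 1 + x ^ q ≤ 2 * x ^ q := by linarith
  have main : (c₀ * x * x) / (2 * x ^ q) ≤ (x * (x - 1 - x ^ q)) / (1 + x ^ q) :=
    div_le_div₀ (le_trans hApos hA) hA hden hDle
  have hxqne : x ^ q ≠ 0 := by positivity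
  have eqR : (x * (x - 1 - x ^ q)) / (1 + x ^ q) = -x + x ^ 2 / (1 + x ^ q) := by
    field_simp; ring
  have eqL : (c₀ / 2) * x ^ (2-q) = (c₀ * x * x) / (2 * x ^ q) := by
    rw [Real.rpow_sub hxpos]
    have h2 : x ^ (2:ℝ) = x * x := by
      rw [show (2:ℝ) = ((2:ℕ):ℝ) by norm_num, Real.rpow_natCast]; ring
    rw [h2]; field_simp
  rw [eqL, ← eqR]; exact main

theorem comparison_finite_time_blowup
    (q v₀ : ℝ) (hq : 0 < q) (hq1 : q < 1)
    (hv₀ : v₀ ^ q + 1 < v₀)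
    (v y : ℝ → ℝ)
    (hv0 : v 0 = v₀)
    (hvpos : ∀ t ≥ (0:ℝ), 0 < v t)
    (hy1 : ∀ t ≥ (0:ℝ), 1 ≤ y t)
    (hdiff : Differentiable ℝ v)
    (hv' : ∀ t ≥ (0:ℝ), deriv v t ≥ -v t + (v t) ^ 2 / (1 + (v t) ^ q)) :
    False := by
  have hv0pos : (0:ℝ) < v₀ := hv0 ▸ hvpos 0 le_rfl
  have h1 : (1:ℝ) < v₀ := by nlinarith [Real.rpow_pos_of_pos hv0pos q]
  set c₀ : ℝ := 1 - 1/v₀ - v₀ ^ (q-1) with hc₀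
  have hc₀pos : 0 < c₀ := c0_pos q v₀ h1 hv₀
  -- Step 1: invariance `v t ≥ v₀` for `t ≥ 0`.
  have hinv : ∀ t ≥ (0:ℝ), v₀ ≤ v t := by
    intro t ht
    have key : ∀ ⦃x⦄, x ∈ Icc (0:ℝ) t → -v x ≤ -v₀ := by
      apply image_le_of_deriv_right_lt_deriv_boundary
        (f' := fun s => -(deriv v s)) (B := fun _ => -v₀) (B' := fun _ => 0)
      · exact (hdiff.continuous.neg).continuousOn
      · exact fun x _ => ((hdiff x).hasDerivAt.neg).hasDerivWithinAt
      · rw [hv0]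
      · exact fun x => hasDerivAt_const x _
      · intro x hx heq
        have hxv : v x = v₀ := by linarith [neg_inj.mp heq]
        have hd := hv' x hx.1
        rw [hxv] at hd
        have hD : (0:ℝ) < 1 + v₀ ^ q := by
          have := Real.rpow_pos_of_pos hv0pos q; linarith
        have h2 : v₀ < v₀ ^ 2 / (1 + v₀ ^ q) := by
          rw [lt_div_iff₀ hD]; nlinarith
        have : 0 < deriv v x := by linarith
        linarith
    have := key (right_mem_Icc.mpr ht)
    linarith
  -- Step 2: the function `u = v^(q-1)` decreases at uniform rate δ.
  set δ : ℝ := (1 - q) * (c₀ / 2) with hδdef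
  have hδ : 0 < δ := by
    exact mul_pos (by linarith) (half_pos hc₀pos)
  set u : ℝ → ℝ := fun t => v t ^ (q-1) with hu
  set h : ℝ → ℝ := fun t => u t + δ * t with hhdef
  have hHD : ∀ t ≥ (0:ℝ),
      HasDerivAt h (deriv v t * (q-1) * v t ^ (q-1-1) + δ) t := by
    intro t ht
    have hvne : v t ≠ 0 := (hvpos t ht).ne'
    have h1' : HasDerivAt (fun s => v s ^ (q-1)) (deriv v t * (q-1) * v t ^ (q-1-1)) t :=
      ((hdiff t).hasDerivAt).rpow_const (Or.inl hvne)
    have h2' : HasDerivAt (fun s => δ * s) (δ * 1) t := (hasDerivAt_id t).const_mul δ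
    have h3 := h1'.add h2'
    rw [mul_one] at h3
    exact h3
  have hderiv_le : ∀ t ∈ interior (Ici (0:ℝ)), deriv h t ≤ 0 := by
    intro t ht
    rw [interior_Ici] at ht
    have ht0 : (0:ℝ) ≤ t := le_of_lt ht
    have hv : 0 < v t := hvpos t ht0
    have hHD' := hHD t ht0
    rw [hHD'.deriv]
    have hlb : (c₀ / 2) * v t ^ (2-q) ≤ deriv v t :=
      le_trans (drift_lb q v₀ (v t) hq hq1 h1 hv₀ (hinv t ht0)) (hv' t ht0)
    have hfac : (q-1) * v t ^ (q-1-1) ≤ 0 :=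
      mul_nonpos_iff.mpr (Or.inr ⟨by linarith, Real.rpow_nonneg hv.le _⟩)
    have hmul : deriv v t * ((q-1) * v t ^ (q-1-1)) ≤
        ((c₀ / 2) * v t ^ (2-q)) * ((q-1) * v t ^ (q-1-1)) :=
      mul_le_mul_of_nonpos_right hlb hfac
    have hvv : v t ^ (2-q) * v t ^ (q-1-1) = 1 := by
      rw [← Real.rpow_add hv, show (2-q) + (q-1-1) = 0 by ring, Real.rpow_zero]
    have heq2 : ((c₀ / 2) * v t ^ (2-q)) * ((q-1) * v t ^ (q-1-1)) = -δ := by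
      calc ((c₀ / 2) * v t ^ (2-q)) * ((q-1) * v t ^ (q-1-1))
          = (c₀ / 2) * (q-1) * (v t ^ (2-q) * v t ^ (q-1-1)) := by ring
        _ = -δ := by rw [hvv, hδdef]; ring
    nlinarith [hmul, heq2]
  have hcont : ContinuousOn h (Ici (0:ℝ)) := by
    intro t ht
    have hvne : v t ≠ 0 := (hvpos t ht).ne'
    exact (((hdiff t).continuousAt.rpow_const (Or.inl hvne)).add
      ((continuous_const.mul continuous_id).continuousAt)).continuousWithinAt
  have hdiffOn : DifferentiableOn ℝ h (interior (Ici (0:ℝ))) := by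
    intro t ht
    rw [interior_Ici] at ht
    exact (hHD t (le_of_lt ht)).differentiableAt.differentiableWithinAt
  have hanti := antitoneOn_of_deriv_nonpos (convex_Ici 0) hcont hdiffOn hderiv_le
  -- Step 3: derive the contradiction.
  set u0 : ℝ := v₀ ^ (q-1) with hu0
  have hu0pos : 0 < u0 := Real.rpow_pos_of_pos hv0pos _
  set T : ℝ := u0 / δ + 1 with hT
  have hTpos : (0:ℝ) ≤ T := by positivity
  have hle := hanti (self_mem_Ici) (mem_Ici.mpr hTpos) hTpos
  have hh0 : h 0 = u0 := by simp [hhdef, hu, hv0, hu0]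
  have hhT : h T = u T + δ * T := rfl
  have hdm : δ * T = u0 + δ := by
    rw [hT]; field_simp
  have huTpos : 0 < u T := Real.rpow_pos_of_pos (hvpos T hTpos) _
  rw [hh0, hhT, hdm] at hle
  linarith
end

section
/- Consider system (2a): x' = x(1-x/γ) - xy/(1+αξ(x)+x), y' = βxy/(1+αξ(x)+x) + βξ(x)y/(1+αξ(x)+x) - δy, with positive parameters γ, β, δ, α, positive initial data, and a density-dependent food function satisfying ξ(x) ≥ 0 and ξ(x) ≤ ξ̄ for all x > 0 (some constant ξ̄). Then pest eradication is not possible in finite time: x(t) > 0 for all t ≥ 0. -/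
theorem nonnegative_density_dependent_food_no_finite_eradication
    (γ β δ α ξbar : ℝ) (ξ : ℝ → ℝ) (x y : ℝ → ℝ)
    (hγ : 0 < γ) (hβ : 0 < β) (hδ : 0 < δ) (hα : 0 < α)
    (hξ : ∀ s > (0:ℝ), 0 ≤ ξ s ∧ ξ s ≤ ξbar)
    (hx0 : 0 < x 0) (hy0 : 0 < y 0)
    (hynn : ∀ t, 0 ≤ y t)
    (hx : ∀ t, HasDerivAt x
      (x t * (1 - x t / γ) - x t * y t / (1 + α * ξ (x t) + x t)) t)
    (hy : ∀ t, HasDerivAt y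
      (β * x t * y t / (1 + α * ξ (x t) + x t)
        + β * ξ (x t) * y t / (1 + α * ξ (x t) + x t) - δ * y t) t) :
    ∀ t ≥ (0:ℝ), 0 < x t := by
  by_contra hcon
  push_neg at hcon
  obtain ⟨T, hT0, hxT⟩ := hcon
  have hxc : Continuous x := continuous_iff_continuousAt.2 fun t => (hx t).continuousAt
  have hyc : Continuous y := continuous_iff_continuousAt.2 fun t => (hy t).continuousAt
  set expr : ℝ → ℝ := fun t =>
    x t * (1 - x t / γ) - x t * y t / (1 + α * ξ (x t) + x t) with hexpr
  set S : Set ℝ := Set.Icc 0 T ∩ x ⁻¹' {0} with hS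
  have hSne : S.Nonempty := by
    obtain ⟨t₁, ht₁, hxt₁⟩ :=
      intermediate_value_Icc' hT0 hxc.continuousOn ⟨hxT, hx0.le⟩
    exact ⟨t₁, ht₁, hxt₁⟩
  have hSclosed : IsClosed S :=
    isClosed_Icc.inter (isClosed_singleton.preimage hxc)
  have hSbdd : BddBelow S := ⟨0, fun s hs => hs.1.1⟩
  set t₀ := sInf S with ht₀
  have ht₀S : t₀ ∈ S := hSclosed.csInf_mem hSne hSbdd
  have ht₀0 : 0 ≤ t₀ := ht₀S.1.1
  have hxt₀ : x t₀ = 0 := ht₀S.2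
  have hpos : ∀ s, 0 ≤ s → s < t₀ → 0 < x s := by
    intro s hs hst
    by_contra hle
    push_neg at hle
    obtain ⟨u, hu, hxu⟩ :=
      intermediate_value_Icc' hs hxc.continuousOn ⟨hle, hx0.le⟩
    have huS : u ∈ S := ⟨⟨hu.1, le_trans hu.2 (le_trans hst.le ht₀S.1.2)⟩, hxu⟩
    have := csInf_le hSbdd huS
    linarith [hu.2]
  obtain ⟨C₁, hC₁⟩ :=
    (isCompact_Icc (a := (0:ℝ)) (b := t₀)).exists_bound_of_continuousOn hxc.continuousOn
  obtain ⟨C₂, hC₂⟩ :=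
    (isCompact_Icc (a := (0:ℝ)) (b := t₀)).exists_bound_of_continuousOn hyc.continuousOn
  set M := max C₁ C₂ with hMdef
  have hxM : ∀ s ∈ Set.Icc (0:ℝ) t₀, x s ≤ M := fun s hs =>
    (le_abs_self _).trans (le_trans (hC₁ s hs) (le_max_left _ _))
  have hyM : ∀ s ∈ Set.Icc (0:ℝ) t₀, y s ≤ M := fun s hs =>
    (le_abs_self _).trans (le_trans (hC₂ s hs) (le_max_right _ _))
  have hM0 : 0 ≤ M := by
    have h0mem : (0:ℝ) ∈ Set.Icc (0:ℝ) t₀ := ⟨le_refl _, ht₀0⟩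
    have h1 := hC₁ 0 h0mem
    rw [Real.norm_eq_abs] at h1
    have := abs_nonneg (x 0)
    have := le_max_left C₁ C₂
    linarith
  set K := 1 + M / γ + M with hKdef
  have hbound : ∀ u, 0 ≤ u → u ≤ t₀ → ‖expr u‖ ≤ K * ‖x u‖ := by
    intro u hu0 hut
    rcases eq_or_lt_of_le hut with h | hlt
    · subst h
      simp [hexpr, hxt₀]
    · have hxu : 0 < x u := hpos u hu0 hlt
      obtain ⟨hξ1, _⟩ := hξ (x u) hxu
      have hD : (1:ℝ) ≤ 1 + α * ξ (x u) + x u := by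
        nlinarith [mul_nonneg hα.le hξ1]
      have hyu := hynn u
      have hxuM : x u ≤ M := hxM u ⟨hu0, hlt.le⟩
      have hyuM : y u ≤ M := hyM u ⟨hu0, hlt.le⟩
      have hterm2 : x u * y u / (1 + α * ξ (x u) + x u) ≤ x u * M := by
        have h1 : x u * y u / (1 + α * ξ (x u) + x u) ≤ x u * y u :=
          div_le_self (mul_nonneg hxu.le hyu) hD
        nlinarith
      have hterm2' : 0 ≤ x u * y u / (1 + α * ξ (x u) + x u) :=
        div_nonneg (mul_nonneg hxu.le hyu) (by linarith)
      have hterm1 : |x u * (1 - x u / γ)| ≤ x u * (1 + M / γ) := by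
        rw [abs_mul, abs_of_pos hxu]
        have h1 : |1 - x u / γ| ≤ 1 + x u / γ := by
          have := abs_sub (1:ℝ) (x u / γ)
          simpa [abs_of_nonneg (div_nonneg hxu.le hγ.le)] using this
        have h2 : x u / γ ≤ M / γ := by gcongr
        nlinarith [abs_nonneg (1 - x u / γ)]
      have habs : ‖expr u‖ ≤ |x u * (1 - x u / γ)| + x u * y u / (1 + α * ξ (x u) + x u) := by
        rw [hexpr]
        calc |x u * (1 - x u / γ) - x u * y u / (1 + α * ξ (x u) + x u)|
            ≤ |x u * (1 - x u / γ)| + |x u * y u / (1 + α * ξ (x u) + x u)| :=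
              abs_sub _ _
          _ = _ := by rw [abs_of_nonneg hterm2']
      have : ‖x u‖ = x u := abs_of_pos hxu
      rw [this, hKdef]
      nlinarith
  have hg : ∀ s : ℝ, HasDerivAt (fun s => x (t₀ - s)) (-(expr (t₀ - s))) s := by
    intro s
    have h1 : HasDerivAt (fun s : ℝ => t₀ - s) (-1) s := (hasDerivAt_id s).const_sub t₀
    have h2 := (hx (t₀ - s)).comp s h1
    simpa [hexpr, mul_neg_one, Function.comp_def] using h2
  have key := norm_le_gronwallBound_of_norm_deriv_right_le
    (f := fun s => x (t₀ - s)) (f' := fun s => -(expr (t₀ - s)))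
    (δ := 0) (K := K) (ε := 0) (a := 0) (b := t₀)
    ((hxc.comp (continuous_const.sub continuous_id)).continuousOn)
    (fun s _ => (hg s).hasDerivWithinAt)
    (by simp [hxt₀])
    (by
      intro s hs
      rw [norm_neg, add_zero]
      exact hbound (t₀ - s) (by linarith [hs.2]) (by linarith [hs.1]))
  have hfin := key t₀ ⟨ht₀0, le_refl _⟩
  rw [gronwallBound_ε0] at hfin
  simp at hfin
  linarith
end

section
/- Let V : [0,T*) → ℝ be positive with V' ≤ C·x·V² where C > 0, x : [0,T*] → ℝ is continuous and nonnegative, and suppose x(t) → 0 as t → T* with V = y/x for y continuous and bounded on [0,T*]. Then V does not tend to infinity as t → T*. -/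
theorem ratio_no_blowup
    (T C : ℝ) (hT : 0 < T) (hC : 0 < C)
    (V x y : ℝ → ℝ)
    (hV : ∀ t ∈ Set.Ico 0 T, V t = y t / x t)
    (hVpos : ∀ t ∈ Set.Ico 0 T, 0 < V t)
    (hxcont : ContinuousOn x (Set.Icc 0 T))
    (hxnn : ∀ t ∈ Set.Icc 0 T, 0 ≤ x t)
    (hycont : ContinuousOn y (Set.Icc 0 T))
    (hybdd : ∃ M : ℝ, ∀ t ∈ Set.Icc 0 T, |y t| ≤ M)
    (hVdiff : ∀ t ∈ Set.Ico 0 T, DifferentiableAt ℝ V t)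
    (hV' : ∀ t ∈ Set.Ico 0 T, deriv V t ≤ C * x t * (V t) ^ 2)
    (hxlim : Filter.Tendsto x (nhdsWithin T (Set.Iio T)) (nhds 0)) :
    ¬ Filter.Tendsto V (nhdsWithin T (Set.Iio T)) Filter.atTop := by
  intro hcon
  obtain ⟨M, hM⟩ := hybdd
  -- x is positive on [0, T)
  have hxpos : ∀ t ∈ Set.Ico 0 T, 0 < x t := by
    intro t ht
    rcases (hxnn t (Set.Ico_subset_Icc_self ht)).lt_or_eq with h | h
    · exact h
    · exfalso
      have h1 := hVpos t ht
      rw [hV t ht, ← h, div_zero] at h1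
      exact lt_irrefl 0 h1
  -- x t ≤ M * (V t)⁻¹
  have hxle : ∀ t ∈ Set.Ico 0 T, x t ≤ M * (V t)⁻¹ := by
    intro t ht
    have hx := hxpos t ht
    have hy : y t = V t * x t := by
      rw [hV t ht]; field_simp
    have hyM : y t ≤ M := (abs_le.1 (hM t (Set.Ico_subset_Icc_self ht))).2
    have hVt := hVpos t ht
    rw [hy] at hyM
    have h := mul_le_mul_of_nonneg_right hyM (inv_pos.2 hVt).le
    rwa [mul_right_comm, mul_inv_cancel₀ hVt.ne', one_mul] at h
  have hM0 : 0 ≤ M := le_trans (abs_nonneg _) (hM 0 ⟨le_refl 0, hT.le⟩)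
  set k : ℝ := C * M with hk
  have hk0 : 0 ≤ k := mul_nonneg hC.le hM0
  set g : ℝ → ℝ := fun t => (V t)⁻¹ * Real.exp (k * t) with hg
  -- g is monotone on [0, T)
  have hmono : MonotoneOn g (Set.Ico 0 T) := by
    apply monotoneOn_of_hasDerivWithinAt_nonneg (convex_Ico 0 T)
      (f' := fun t => -(deriv V t) / (V t) ^ 2 * Real.exp (k * t)
        + (V t)⁻¹ * (Real.exp (k * t) * k))
    · intro t ht
      exact (((hVdiff t ht).continuousAt.inv₀ (hVpos t ht).ne').mul
        (Real.continuous_exp.comp (continuous_const.mul continuous_id)).continuousAt).continuousWithinAt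
    · intro t ht
      rw [interior_Ico] at ht
      have ht' : t ∈ Set.Ico 0 T := ⟨ht.1.le, ht.2⟩
      have h1 : HasDerivAt (fun s => (V s)⁻¹) (-(deriv V t) / (V t) ^ 2) t :=
        (hVdiff t ht').hasDerivAt.inv (hVpos t ht').ne'
      have h2 : HasDerivAt (fun s => Real.exp (k * s)) (Real.exp (k * t) * k) t := by
        simpa [Function.comp_def] using (Real.hasDerivAt_exp (k * t)).comp t ((hasDerivAt_id t).const_mul k)
      exact (h1.mul h2).hasDerivWithinAt
    · intro t ht
      rw [interior_Ico] at ht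
      have ht' : t ∈ Set.Ico 0 T := ⟨ht.1.le, ht.2⟩
      have hVt := hVpos t ht'
      have hderiv : deriv V t ≤ k * V t := by
        have h1 := hV' t ht'
        have h2 := hxle t ht'
        have h3 : C * x t * V t ^ 2 ≤ C * (M * (V t)⁻¹) * V t ^ 2 := by
          have := mul_le_mul_of_nonneg_left h2 hC.le
          nlinarith [sq_nonneg (V t)]
        have h4 : C * (M * (V t)⁻¹) * V t ^ 2 = k * V t := by
          field_simp [hk]; ring
        linarith
      have hexp : 0 < Real.exp (k * t) := Real.exp_pos _
      have h5 : -(deriv V t) / (V t) ^ 2 + (V t)⁻¹ * k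
          = (k * V t - deriv V t) / (V t) ^ 2 := by
        field_simp; ring
      have h6 : 0 ≤ -(deriv V t) / (V t) ^ 2 + (V t)⁻¹ * k := by
        rw [h5]; exact div_nonneg (by linarith) (sq_nonneg _)
      nlinarith [mul_nonneg h6 hexp.le]
  -- V is bounded on [0, T)
  have h0T : (0:ℝ) ∈ Set.Ico 0 T := ⟨le_refl 0, hT⟩
  have hbound : ∀ t ∈ Set.Ico 0 T, V t ≤ Real.exp (k * T) * V 0 := by
    intro t ht
    have h1 := hmono h0T ht ht.1
    have hV0 := hVpos 0 h0T
    have hVt := hVpos t ht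
    simp only [hg, mul_zero, Real.exp_zero, mul_one] at h1
    -- h1 : (V 0)⁻¹ ≤ (V t)⁻¹ * exp (k * t)
    have hexpT : Real.exp (k * t) ≤ Real.exp (k * T) :=
      Real.exp_le_exp.2 (mul_le_mul_of_nonneg_left ht.2.le hk0)
    have hexp : 0 < Real.exp (k * t) := Real.exp_pos _
    have h2 : (V 0)⁻¹ ≤ (V t)⁻¹ * Real.exp (k * T) :=
      le_trans h1 (mul_le_mul_of_nonneg_left hexpT (inv_pos.2 hVt).le)
    have h4 : V t * V 0 * (V 0)⁻¹ ≤ V t * V 0 * ((V t)⁻¹ * Real.exp (k * T)) :=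
      mul_le_mul_of_nonneg_left h2 (mul_pos hVt hV0).le
    have e1 : V t * V 0 * (V 0)⁻¹ = V t := by field_simp
    have e2 : V t * V 0 * ((V t)⁻¹ * Real.exp (k * T)) = Real.exp (k * T) * V 0 := by
      field_simp
    rw [e1, e2] at h4
    exact h4
  -- contradiction with blow-up
  have hne : (nhdsWithin T (Set.Iio T)).NeBot := nhdsLT_neBot T
  have h1 : ∀ᶠ t in nhdsWithin T (Set.Iio T), Real.exp (k * T) * V 0 + 1 ≤ V t :=
    hcon.eventually_ge_atTop _
  have h2 : ∀ᶠ t in nhdsWithin T (Set.Iio T), t ∈ Set.Ico 0 T := by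
    have ha : ∀ᶠ t in nhdsWithin T (Set.Iio T), (0:ℝ) < t :=
      eventually_nhdsWithin_of_eventually_nhds (eventually_gt_nhds hT)
    have hb : ∀ᶠ t in nhdsWithin T (Set.Iio T), t < T := eventually_mem_nhdsWithin
    filter_upwards [ha, hb] with t h0 hTt
    exact ⟨h0.le, hTt⟩
  obtain ⟨t, ht1, ht2⟩ := (h1.and h2).exists
  have := hbound t ht2
  linarith
end
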